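/- arXiv:1411.0656 — 3 statements merged into one kernel-verified Lean document; each statement's English description precedes it below -/
import Mathlib

section
/- Let $N_+$ and $N_-$ be rank 2 integral lattices of signature $(1,1)$ with discriminants $-\Delta_\pm$, containing primitive vectors $A_\pm$ with $A_\pm^2 > 0$, and let $a_\pm$ be the positive generator of the image of the map $N_\pm \to \mathbb{Z}$, $v \mapsto v\cdot B_\pm$, where $B_\pm$ generates $A_\pm^\perp$ in $N_\pm$. Suppose $B_+^2 = B_-^2 =: B^2 < 0$ and $B^2$ divides $a_+ a_-$. Then the quotient $W := (N_+ \oplus N_-)/\langle B_+ - B_- \rangle$ carries a well-defined integral symmetric bilinear form extending those of $N_+$ and $N_-$, in which $A_+ \perp N_-$ and $A_- \perp N_+$. -/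
/-- The subgroup `⟨(B₊, -B₋)⟩` of `N₊ ⊕ N₋` by which one quotients to form `W`. -/
def stmt2Rel (BP BM : Fin 2 → ℤ) : Submodule ℤ ((Fin 2 → ℤ) × (Fin 2 → ℤ)) :=
  Submodule.span ℤ {(BP, -BM)}

private lemma stmt2_ediv_add {d a b : ℤ} (hdne : d ≠ 0) (ha : d ∣ a) (hb : d ∣ b) :
    (a + b) / d = a / d + b / d := by
  obtain ⟨x, rfl⟩ := ha; obtain ⟨y, rfl⟩ := hb
  rw [← mul_add, Int.mul_ediv_cancel_left _ hdne, Int.mul_ediv_cancel_left _ hdne,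
    Int.mul_ediv_cancel_left _ hdne]

/-- The bilinear form on `N₊ ⊕ N₋` before descending to the quotient. -/
def stmt2F (bP bM : (Fin 2 → ℤ) →ₗ[ℤ] (Fin 2 → ℤ) →ₗ[ℤ] ℤ) (BP BM : Fin 2 → ℤ)
    (hdne : bP BP BP ≠ 0)
    (hdc : ∀ v w : Fin 2 → ℤ, bP BP BP ∣ bP v BP * bM w BM) :
    ((Fin 2 → ℤ) × (Fin 2 → ℤ)) →ₗ[ℤ] ((Fin 2 → ℤ) × (Fin 2 → ℤ)) →ₗ[ℤ] ℤ :=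
  LinearMap.mk₂ ℤ
    (fun p q => bP p.1 q.1 + bM p.2 q.2 +
      bP p.1 BP * bM q.2 BM / bP BP BP + bP q.1 BP * bM p.2 BM / bP BP BP)
    (fun p p' q => by
      simp only [Prod.fst_add, Prod.snd_add, map_add, LinearMap.add_apply]
      rw [add_mul, stmt2_ediv_add hdne (hdc _ _) (hdc _ _),
        mul_add, stmt2_ediv_add hdne (hdc _ _) (hdc _ _)]
      ring)
    (fun n p q => by
      simp only [Prod.smul_fst, Prod.smul_snd, map_smul, LinearMap.smul_apply,
        smul_eq_mul]
      rw [show n * bP p.1 BP * bM q.2 BM = n * (bP p.1 BP * bM q.2 BM) by ring,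
        Int.mul_ediv_assoc _ (hdc _ _),
        show bP q.1 BP * (n * bM p.2 BM) = n * (bP q.1 BP * bM p.2 BM) by ring,
        Int.mul_ediv_assoc _ (hdc _ _)]
      ring)
    (fun p q q' => by
      simp only [Prod.fst_add, Prod.snd_add, map_add, LinearMap.add_apply]
      rw [mul_add, stmt2_ediv_add hdne (hdc _ _) (hdc _ _),
        add_mul, stmt2_ediv_add hdne (hdc _ _) (hdc _ _)]
      ring)
    (fun n p q => by
      simp only [Prod.smul_fst, Prod.smul_snd, map_smul, LinearMap.smul_apply,
        smul_eq_mul]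
      rw [show bP p.1 BP * (n * bM q.2 BM) = n * (bP p.1 BP * bM q.2 BM) by ring,
        Int.mul_ediv_assoc _ (hdc _ _),
        show n * bP q.1 BP * bM p.2 BM = n * (bP q.1 BP * bM p.2 BM) by ring,
        Int.mul_ediv_assoc _ (hdc _ _)]
      ring)

lemma stmt2F_apply (bP bM : (Fin 2 → ℤ) →ₗ[ℤ] (Fin 2 → ℤ) →ₗ[ℤ] ℤ) (BP BM : Fin 2 → ℤ)
    (hdne : bP BP BP ≠ 0)
    (hdc : ∀ v w : Fin 2 → ℤ, bP BP BP ∣ bP v BP * bM w BM)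
    (p q : (Fin 2 → ℤ) × (Fin 2 → ℤ)) :
    stmt2F bP bM BP BM hdne hdc p q = bP p.1 q.1 + bM p.2 q.2 +
      bP p.1 BP * bM q.2 BM / bP BP BP + bP q.1 BP * bM p.2 BM / bP BP BP := rfl

/-- Sufficiency direction of Lemma 6.3: if `B₊² = B₋² =: B² < 0` and `B²` divides
`a₊a₋`, where `a±` is the positive generator of the image of `v ↦ v·B±` on `N±`, then the
quotient `W = (N₊ ⊕ N₋)/⟨B₊ - B₋⟩` carries a well-defined integral symmetric bilinear form
extending those of `N₊` and `N₋`, with cross pairing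
`v₊·v₋ = (v₊·B₊)(v₋·B₋)/B²`, in which `A₊ ⊥ N₋` and `A₋ ⊥ N₊`. -/
theorem stmt_2
    (bP bM : (Fin 2 → ℤ) →ₗ[ℤ] (Fin 2 → ℤ) →ₗ[ℤ] ℤ)
    (hsymmP : ∀ x y, bP x y = bP y x) (hsymmM : ∀ x y, bM x y = bM y x)
    (ΔP ΔM : ℤ) (hΔP : 0 < ΔP) (hΔM : 0 < ΔM)
    (hdiscP : Matrix.det
      !![bP (Pi.single 0 1) (Pi.single 0 1), bP (Pi.single 0 1) (Pi.single 1 1);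
         bP (Pi.single 1 1) (Pi.single 0 1), bP (Pi.single 1 1) (Pi.single 1 1)] = -ΔP)
    (hdiscM : Matrix.det
      !![bM (Pi.single 0 1) (Pi.single 0 1), bM (Pi.single 0 1) (Pi.single 1 1);
         bM (Pi.single 1 1) (Pi.single 0 1), bM (Pi.single 1 1) (Pi.single 1 1)] = -ΔM)
    (AP AM : Fin 2 → ℤ)
    (hAPprim : ∀ (n : ℤ) (v : Fin 2 → ℤ), AP = n • v → IsUnit n)
    (hAMprim : ∀ (n : ℤ) (v : Fin 2 → ℤ), AM = n • v → IsUnit n)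
    (hAPpos : 0 < bP AP AP) (hAMpos : 0 < bM AM AM)
    (BP BM : Fin 2 → ℤ)
    (hBPorth : bP AP BP = 0) (hBPne : BP ≠ 0)
    (hBPgen : ∀ v, bP AP v = 0 → ∃ n : ℤ, v = n • BP)
    (hBMorth : bM AM BM = 0) (hBMne : BM ≠ 0)
    (hBMgen : ∀ v, bM AM v = 0 → ∃ n : ℤ, v = n • BM)
    (hBsq : bP BP BP = bM BM BM) (hBneg : bP BP BP < 0)
    (aP aM : ℤ) (haPpos : 0 < aP) (haMpos : 0 < aM)
    (haPmem : ∃ v, bP v BP = aP) (haPdvd : ∀ v, aP ∣ bP v BP)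
    (haMmem : ∃ v, bM v BM = aM) (haMdvd : ∀ v, aM ∣ bM v BM)
    (hdvd : bP BP BP ∣ aP * aM) :
    ∃ bW : (((Fin 2 → ℤ) × (Fin 2 → ℤ)) ⧸ stmt2Rel BP BM) →ₗ[ℤ]
           (((Fin 2 → ℤ) × (Fin 2 → ℤ)) ⧸ stmt2Rel BP BM) →ₗ[ℤ] ℤ,
      (∀ x y, bW x y = bW y x) ∧
      (∀ v w : Fin 2 → ℤ,
        bW ((stmt2Rel BP BM).mkQ (v, 0)) ((stmt2Rel BP BM).mkQ (w, 0)) = bP v w) ∧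
      (∀ v w : Fin 2 → ℤ,
        bW ((stmt2Rel BP BM).mkQ (0, v)) ((stmt2Rel BP BM).mkQ (0, w)) = bM v w) ∧
      (∀ v w : Fin 2 → ℤ,
        (bP BP BP) * bW ((stmt2Rel BP BM).mkQ (v, 0)) ((stmt2Rel BP BM).mkQ (0, w))
          = (bP v BP) * (bM w BM)) ∧
      (∀ w : Fin 2 → ℤ,
        bW ((stmt2Rel BP BM).mkQ (AP, 0)) ((stmt2Rel BP BM).mkQ (0, w)) = 0) ∧
      (∀ v : Fin 2 → ℤ,
        bW ((stmt2Rel BP BM).mkQ (v, 0)) ((stmt2Rel BP BM).mkQ (0, AM)) = 0) := by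
  have hdne : bP BP BP ≠ 0 := ne_of_lt hBneg
  have hdc : ∀ v w : Fin 2 → ℤ, bP BP BP ∣ bP v BP * bM w BM := fun v w =>
    hdvd.trans (mul_dvd_mul (haPdvd v) (haMdvd w))
  set F := stmt2F bP bM BP BM hdne hdc with hFdef
  have hFap : ∀ p q, F p q = bP p.1 q.1 + bM p.2 q.2 +
      bP p.1 BP * bM q.2 BM / bP BP BP + bP q.1 BP * bM p.2 BM / bP BP BP :=
    stmt2F_apply bP bM BP BM hdne hdc
  have hFsymm : ∀ p q, F p q = F q p := by
    intro p q
    rw [hFap, hFap, hsymmP p.1 q.1, hsymmM p.2 q.2]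
    ring
  -- F vanishes on (BP, -BM) in the first argument
  have hFzero : ∀ q, F (BP, -BM) q = 0 := by
    intro q
    rw [hFap]
    simp only [map_neg, LinearMap.neg_apply]
    rw [Int.mul_ediv_cancel_left _ hdne,
      show bP q.1 BP * -(bM BM BM) = -(bM BM BM) * bP q.1 BP by ring, ← hBsq,
      show -(bP BP BP) * bP q.1 BP = -(bP BP BP * bP q.1 BP) by ring]
    rw [Int.neg_ediv_of_dvd ⟨bP q.1 BP, rfl⟩, Int.mul_ediv_cancel_left _ hdne,
      hsymmM q.2 BM, hsymmP q.1 BP]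
    ring
  have hker : stmt2Rel BP BM ≤ LinearMap.ker F :=
    Submodule.span_le.mpr (Set.singleton_subset_iff.mpr
      (LinearMap.mem_ker.mpr (LinearMap.ext hFzero)))
  set G := (stmt2Rel BP BM).liftQ F hker with hGdef
  have hGap : ∀ p, G ((stmt2Rel BP BM).mkQ p) = F p := fun p => rfl
  have hGflipzero : ∀ x, G.flip (BP, -BM) x = 0 := by
    intro x
    obtain ⟨p, rfl⟩ := (stmt2Rel BP BM).mkQ_surjective x
    show G ((stmt2Rel BP BM).mkQ p) (BP, -BM) = 0
    rw [hGap, hFsymm, hFzero]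
  have hker2 : stmt2Rel BP BM ≤ LinearMap.ker G.flip :=
    Submodule.span_le.mpr (Set.singleton_subset_iff.mpr
      (LinearMap.mem_ker.mpr (LinearMap.ext hGflipzero)))
  refine ⟨(stmt2Rel BP BM).liftQ G.flip hker2, ?_, ?_, ?_, ?_, ?_, ?_⟩
  · intro x y
    obtain ⟨p, rfl⟩ := (stmt2Rel BP BM).mkQ_surjective x
    obtain ⟨q, rfl⟩ := (stmt2Rel BP BM).mkQ_surjective y
    show F q p = F p q
    rw [hFsymm]
  · intro v w
    show F (w, 0) (v, 0) = bP v w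
    rw [hFap]
    simp [hsymmP w v]
  · intro v w
    show F (0, w) (0, v) = bM v w
    rw [hFap]
    simp [hsymmM w v]
  · intro v w
    show bP BP BP * F (0, w) (v, 0) = bP v BP * bM w BM
    rw [hFap]
    simp only [map_zero, LinearMap.zero_apply, zero_mul, mul_zero, Int.zero_ediv,
      zero_add, add_zero]
    exact Int.mul_ediv_cancel' (hdc v w)
  · intro w
    show F (0, w) (AP, 0) = 0
    rw [hFap]
    simp [hBPorth]
  · intro v
    show F (0, AM) (v, 0) = 0
    rw [hFap]
    simp [hBMorth]
end

section
/- Let $N_\pm$ be rank 2 lattices of signature $(1,1)$ with discriminants $-\Delta_\pm$, with positive vectors $A_\pm \in N_\pm$ and $k > 0$ satisfying $\Delta_+\Delta_- > k^2 A_+^2 A_-^2$. Let $B_\pm$ generate $A_\pm^\perp$ in $N_\pm$, form $W_k$ as above, and let $\Lambda_\pm$ be the orthogonal complement of $A_\mp$ in $W_k$. Suppose $H \in N_\pm$ satisfies $-H^2 B_\mp^2 (\Delta_+\Delta_- - k^2 A_+^2 A_-^2) \ge \Delta_\pm \Delta_+ \Delta_-$. Then for every $v \in \Lambda_\pm$ linearly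 independent of $H$, one has $(v\cdot H)^2 - v^2 H^2 \ge \Delta_\pm$. -/
set_option maxHeartbeats 1000000

private lemma one_le_sq {a : ℤ} (h : a ≠ 0) : 1 ≤ a ^ 2 := by
  have h1 := Int.one_le_abs h
  nlinarith [abs_nonneg a, sq_abs a]

private lemma quad_nonneg (dP D n M c : ℤ) (hdP : 0 < dP) (hc0 : 0 ≤ c)
    (hKEY : M ^ 2 ≤ D ^ 2 * c) :
    0 ≤ dP ^ 2 * D ^ 2 + 2 * dP * n * M + n ^ 2 * c := by
  rcases eq_or_lt_of_le hc0 with heq | hpos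
  · have hM2 : M ^ 2 ≤ 0 := by
      have h := hKEY; rw [← heq] at h; simpa using h
    have hM0 : M = 0 := by nlinarith [sq_nonneg M]
    rw [hM0, ← heq]; nlinarith [sq_nonneg (dP * D)]
  · have h1 : (0:ℤ) ≤ (c * n + dP * M) ^ 2 + dP ^ 2 * (D ^ 2 * c - M ^ 2) := by
      have h2 : (0:ℤ) ≤ dP ^ 2 * (D ^ 2 * c - M ^ 2) := by
        have h3 : (0:ℤ) ≤ D ^ 2 * c - M ^ 2 := by linarith [hKEY]
        positivity
      nlinarith [sq_nonneg (c * n + dP * M)]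
    have h2 : c * (dP ^ 2 * D ^ 2 + 2 * dP * n * M + n ^ 2 * c) =
        (c * n + dP * M) ^ 2 + dP ^ 2 * (D ^ 2 * c - M ^ 2) := by ring
    nlinarith [h1, h2, hpos]

private lemma core (dP dM k A2 AM2 B2 H2 P x2 D fx fH AH Cx CH gB n : ℤ)
    (hdP : 0 < dP) (hdM : 0 < dM)
    (hA2 : 0 < A2) (hAM2 : 0 < AM2)
    (hsig : k ^ 2 * A2 * AM2 < dP * dM)
    (R1 : P ^ 2 - x2 * H2 = dP * D ^ 2)
    (R2 : AH ^ 2 - A2 * H2 = dP * fH ^ 2)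
    (R3 : fH * P - fx * H2 = -(D * AH))
    (R3' : fH ^ 2 * x2 - 2 * fx * fH * P + fx ^ 2 * H2 = D ^ 2 * A2)
    (R4 : fH * Cx = fx * CH)
    (R5x : Cx ^ 2 ≤ k ^ 2 * gB ^ 2 * fx ^ 2)
    (R5H : CH ^ 2 ≤ k ^ 2 * gB ^ 2 * fH ^ 2)
    (R6 : dM * gB ^ 2 = -(B2 * AM2))
    (hgB : gB ≠ 0)
    (hyp : -H2 * B2 * (dP * dM - k ^ 2 * A2 * AM2) ≥ dP * (dP * dM))
    (hDn : ¬(D = 0 ∧ n = 0)) :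
    (P + n * CH) ^ 2 - (x2 + 2 * n * Cx + n ^ 2 * B2) * H2 ≥ dP := by
  have hgB2 : 1 ≤ gB ^ 2 := one_le_sq hgB
  have hκ : 0 < dP * dM - k ^ 2 * A2 * AM2 := by linarith
  have hB2 : B2 < 0 := by nlinarith
  have hH2 : 0 < H2 := by
    rcases lt_or_ge 0 H2 with h | h
    · exact h
    · exfalso
      have h1 : -H2 * B2 ≤ 0 := by nlinarith
      nlinarith [mul_pos hdP (mul_pos hdP hdM)]
  obtain ⟨M, hM⟩ : ∃ M : ℤ, M = CH * P - Cx * H2 := ⟨_, rfl⟩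
  obtain ⟨E, hE⟩ : ∃ E : ℤ, E = k ^ 2 * gB ^ 2 * A2 * H2 := ⟨_, rfl⟩
  have hE0 : 0 ≤ E := by
    have h1 : (0:ℤ) ≤ k ^ 2 * gB ^ 2 := by positivity
    nlinarith [mul_pos hA2 hH2]
  have hdMmul : dM * (E + dP * B2 * H2 + dP ^ 2) =
      B2 * H2 * (dP * dM - k ^ 2 * A2 * AM2) + dP ^ 2 * dM := by
    rw [hE]; linear_combination (k ^ 2 * A2 * H2) * R6
  have hEbound : E + dP * B2 * H2 + dP ^ 2 ≤ 0 := by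
    have h6 : dM * (E + dP * B2 * H2 + dP ^ 2) ≤ dM * 0 := by
      rw [mul_zero]; linarith [hdMmul, hyp]
    exact le_of_mul_le_mul_left h6 hdM
  have hKEY : M ^ 2 ≤ D ^ 2 * (E + dP * CH ^ 2) := by
    rcases eq_or_ne fH 0 with h0 | hne
    · have hCH2 : CH ^ 2 ≤ 0 := by rw [h0] at R5H; simpa using R5H
      have hCH : CH = 0 := by nlinarith [sq_nonneg CH]
      have hfx : fx ^ 2 * H2 = D ^ 2 * A2 := by
        rw [h0] at R3'; linarith [R3']
      have hMe : M = -(Cx * H2) := by rw [hM, hCH]; ring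
      have h1 : Cx ^ 2 * H2 ^ 2 ≤ k ^ 2 * gB ^ 2 * fx ^ 2 * H2 ^ 2 :=
        mul_le_mul_of_nonneg_right R5x (sq_nonneg H2)
      have h2 : k ^ 2 * gB ^ 2 * fx ^ 2 * H2 ^ 2 = D ^ 2 * E := by
        rw [hE]; linear_combination (k ^ 2 * gB ^ 2 * H2) * hfx
      have h3 : (0:ℤ) ≤ D ^ 2 * (dP * CH ^ 2) := by positivity
      calc M ^ 2 = Cx ^ 2 * H2 ^ 2 := by rw [hMe]; ring
        _ ≤ k ^ 2 * gB ^ 2 * fx ^ 2 * H2 ^ 2 := h1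
        _ = D ^ 2 * E := h2
        _ ≤ D ^ 2 * (E + dP * CH ^ 2) := by nlinarith [h3]
    · have hfH2 : 1 ≤ fH ^ 2 := one_le_sq hne
      have hfHpos : (0:ℤ) < fH ^ 2 := by linarith
      have hfM : fH * M = -(CH * (D * AH)) := by
        rw [hM]; linear_combination CH * R3 - H2 * R4
      have hsq : fH ^ 2 * M ^ 2 = CH ^ 2 * D ^ 2 * AH ^ 2 := by
        linear_combination (fH * M - CH * (D * AH)) * hfM
      have hAH2 : AH ^ 2 = A2 * H2 + dP * fH ^ 2 := by linarith [R2]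
      have hb : CH ^ 2 * (D ^ 2 * (A2 * H2)) ≤ k ^ 2 * gB ^ 2 * fH ^ 2 * (D ^ 2 * (A2 * H2)) := by
        have hnn : (0:ℤ) ≤ D ^ 2 * (A2 * H2) := by positivity
        exact mul_le_mul_of_nonneg_right R5H hnn
      have hs2 : CH ^ 2 * D ^ 2 * AH ^ 2 =
          CH ^ 2 * (D ^ 2 * (A2 * H2)) + dP * CH ^ 2 * D ^ 2 * fH ^ 2 := by
        linear_combination (CH ^ 2 * D ^ 2) * hAH2
      have hfin : fH ^ 2 * M ^ 2 ≤ fH ^ 2 * (D ^ 2 * (E + dP * CH ^ 2)) := by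
        rw [hE]; linarith [hsq, hs2, hb]
      exact le_of_mul_le_mul_left hfin hfHpos
  have hgoal_eq : (P + n * CH) ^ 2 - (x2 + 2 * n * Cx + n ^ 2 * B2) * H2 =
      dP * D ^ 2 + 2 * n * M + n ^ 2 * (CH ^ 2 - B2 * H2) := by
    rw [hM]; linear_combination R1
  rw [hgoal_eq]
  rcases eq_or_ne n 0 with hn0 | hn
  · have hDne : D ≠ 0 := fun h => hDn ⟨h, hn0⟩
    have h1 : 1 ≤ D ^ 2 := one_le_sq hDne
    rw [hn0]; nlinarith [h1]
  · have hn2 : 1 ≤ n ^ 2 := one_le_sq hn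
    have hcnn : 0 ≤ E + dP * CH ^ 2 := by nlinarith [hE0, sq_nonneg CH]
    have hbr := quad_nonneg dP D n M (E + dP * CH ^ 2) hdP hcnn hKEY
    have h3 : n ^ 2 * (dP * (CH ^ 2 - B2 * H2)) ≥ n ^ 2 * (dP * CH ^ 2 + E + dP ^ 2) := by
      have h4 : dP * (CH ^ 2 - B2 * H2) ≥ dP * CH ^ 2 + E + dP ^ 2 := by linarith [hEbound]
      exact mul_le_mul_of_nonneg_left h4 (sq_nonneg n)
    have h7 : dP ^ 2 ≤ n ^ 2 * dP ^ 2 := by nlinarith [hn2, sq_nonneg dP]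
    have h4 : dP * dP ≤ dP * (dP * D ^ 2 + 2 * n * M + n ^ 2 * (CH ^ 2 - B2 * H2)) := by
      linarith [hbr, h3, h7]
    have h5 := le_of_mul_le_mul_left h4 hdP
    linarith [h5]


private lemma crossbound (k c00 c01 c10 c11 AP0 AP1 AM0 AM1 BM0 BM1 v0 v1 w0 w1 : ℤ)
    (hk : 0 < k)
    (hAPne : ¬(AP0 = 0 ∧ AP1 = 0))
    (hgB : BM0 * AM1 - BM1 * AM0 ≠ 0)
    (ha0 : AP0 * c00 + AP1 * c10 = 0) (ha1 : AP0 * c01 + AP1 * c11 = 0)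
    (hb0 : c00 * AM0 + c01 * AM1 = 0) (hb1 : c10 * AM0 + c11 * AM1 = 0)
    (h00 : k ∣ c00) (h01 : k ∣ c01) (h10 : k ∣ c10) (h11 : k ∣ c11)
    (hval : c00 * v0 * w0 + c01 * v0 * w1 + c10 * v1 * w0 + c11 * v1 * w1 = k) :
    ∀ z0 z1 : ℤ, (c00 * z0 * BM0 + c01 * z0 * BM1 + c10 * z1 * BM0 + c11 * z1 * BM1) ^ 2
      ≤ k ^ 2 * (BM0 * AM1 - BM1 * AM0) ^ 2 * (z0 * AP1 - z1 * AP0) ^ 2 := by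
  obtain ⟨d00, rfl⟩ := h00
  obtain ⟨d01, rfl⟩ := h01
  obtain ⟨d10, rfl⟩ := h10
  obtain ⟨d11, rfl⟩ := h11
  have hk' : k ≠ 0 := hk.ne'
  have ha0' : AP0 * d00 + AP1 * d10 = 0 := by
    refine mul_left_cancel₀ hk' ?_
    rw [mul_zero]; linear_combination ha0
  have ha1' : AP0 * d01 + AP1 * d11 = 0 := by
    refine mul_left_cancel₀ hk' ?_
    rw [mul_zero]; linear_combination ha1
  have hb0' : d00 * AM0 + d01 * AM1 = 0 := by
    refine mul_left_cancel₀ hk' ?_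
    rw [mul_zero]; linear_combination hb0
  have hb1' : d10 * AM0 + d11 * AM1 = 0 := by
    refine mul_left_cancel₀ hk' ?_
    rw [mul_zero]; linear_combination hb1
  have hval' : d00 * v0 * w0 + d01 * v0 * w1 + d10 * v1 * w0 + d11 * v1 * w1 = 1 := by
    refine mul_left_cancel₀ hk' ?_
    rw [mul_one]; linear_combination hval
  obtain ⟨gB, hgBe⟩ : ∃ gB : ℤ, gB = BM0 * AM1 - BM1 * AM0 := ⟨_, rfl⟩
  rw [← hgBe] at hgB ⊢
  obtain ⟨Cv, hCv⟩ : ∃ Cv : ℤ,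
      Cv = d00 * v0 * BM0 + d01 * v0 * BM1 + d10 * v1 * BM0 + d11 * v1 * BM1 := ⟨_, rfl⟩
  obtain ⟨gw, hgw⟩ : ∃ gw : ℤ, gw = w0 * AM1 - w1 * AM0 := ⟨_, rfl⟩
  have hB : gw * Cv = gB := by
    rw [hgw, hCv, hgBe]
    linear_combination ((w0 * BM1 - w1 * BM0) * v0) * hb0' +
      ((w0 * BM1 - w1 * BM0) * v1) * hb1' + (BM0 * AM1 - BM1 * AM0) * hval'
  have hCvne : Cv ≠ 0 := by
    intro h; rw [h, mul_zero] at hB; exact hgB hB.symm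
  have hgwne : gw ≠ 0 := by
    intro h; rw [h, zero_mul] at hB; exact hgB hB.symm
  have hB2 : gB ^ 2 = gw ^ 2 * Cv ^ 2 := by rw [← hB]; ring
  have hCv2 : Cv ^ 2 ≤ gB ^ 2 := by nlinarith [one_le_sq hgwne, sq_nonneg Cv]
  have rank1 : ∀ z0 z1 : ℤ, (z0 * AP1 - z1 * AP0) * Cv =
      (v0 * AP1 - v1 * AP0) * (d00 * z0 * BM0 + d01 * z0 * BM1 + d10 * z1 * BM0 + d11 * z1 * BM1) := by
    intro z0 z1
    rw [hCv]
    linear_combination ((z0 * v1 - z1 * v0) * BM0) * ha0' + ((z0 * v1 - z1 * v0) * BM1) * ha1'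
  have hfv : v0 * AP1 - v1 * AP0 ≠ 0 := by
    intro h
    have h1 := rank1 1 0
    have h2 := rank1 0 1
    rw [h, zero_mul] at h1 h2
    have e1 : AP1 * Cv = 0 := by linear_combination h1
    have e2 : AP0 * Cv = 0 := by linear_combination -h2
    rcases mul_eq_zero.mp e1 with h' | h'
    · rcases mul_eq_zero.mp e2 with h'' | h''
      · exact hAPne ⟨h'', h'⟩
      · exact hCvne h''
    · exact hCvne h'
  intro z0 z1
  have hr := rank1 z0 z1
  have hsq : (v0 * AP1 - v1 * AP0) ^ 2 *
      (d00 * z0 * BM0 + d01 * z0 * BM1 + d10 * z1 * BM0 + d11 * z1 * BM1) ^ 2 =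
      (z0 * AP1 - z1 * AP0) ^ 2 * Cv ^ 2 := by
    linear_combination -((z0 * AP1 - z1 * AP0) * Cv + (v0 * AP1 - v1 * AP0) *
      (d00 * z0 * BM0 + d01 * z0 * BM1 + d10 * z1 * BM0 + d11 * z1 * BM1)) * hr
  have h1le : 1 ≤ (v0 * AP1 - v1 * AP0) ^ 2 := one_le_sq hfv
  have hCz : (d00 * z0 * BM0 + d01 * z0 * BM1 + d10 * z1 * BM0 + d11 * z1 * BM1) ^ 2 ≤
      gB ^ 2 * (z0 * AP1 - z1 * AP0) ^ 2 := by
    nlinarith [hsq, hCv2, h1le, sq_nonneg (d00 * z0 * BM0 + d01 * z0 * BM1 + d10 * z1 * BM0 + d11 * z1 * BM1),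
      sq_nonneg (z0 * AP1 - z1 * AP0)]
  have hfin := mul_le_mul_of_nonneg_left hCz (sq_nonneg k)
  nlinarith [hfin]

private def bfP (p00 p01 p11 x0 x1 y0 y1 : ℤ) : ℤ :=
  p00 * x0 * y0 + p01 * (x0 * y1 + x1 * y0) + p11 * x1 * y1

private def cfX (c00 c01 c10 c11 x0 x1 y0 y1 : ℤ) : ℤ :=
  c00 * x0 * y0 + c01 * x0 * y1 + c10 * x1 * y0 + c11 * x1 * y1

private lemma vec_decomp (x : Fin 2 → ℤ) :
    x = x 0 • Pi.single 0 1 + x 1 • Pi.single 1 1 := by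
  funext i; fin_cases i <;> simp

private lemma expand_bilin (b : (Fin 2 → ℤ) →ₗ[ℤ] (Fin 2 → ℤ) →ₗ[ℤ] ℤ)
    (hs : ∀ x y, b x y = b y x) (a c : Fin 2 → ℤ) :
    b a c = bfP (b (Pi.single 0 1) (Pi.single 0 1)) (b (Pi.single 0 1) (Pi.single 1 1))
      (b (Pi.single 1 1) (Pi.single 1 1)) (a 0) (a 1) (c 0) (c 1) := by
  have key : ∀ u v s t : ℤ,
      b (u • Pi.single 0 1 + v • Pi.single 1 1) (s • Pi.single 0 1 + t • Pi.single 1 1) =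
      bfP (b (Pi.single 0 1) (Pi.single 0 1)) (b (Pi.single 0 1) (Pi.single 1 1))
        (b (Pi.single 1 1) (Pi.single 1 1)) u v s t := by
    intro u v s t
    simp only [map_add, map_smul, LinearMap.add_apply, LinearMap.smul_apply, smul_eq_mul, bfP]
    rw [hs (Pi.single 1 1) (Pi.single 0 1)]
    ring
  have h := key (a 0) (a 1) (c 0) (c 1)
  rwa [← vec_decomp a, ← vec_decomp c] at h

private lemma disc_identity (p00 p01 p11 Δ x0 x1 y0 y1 : ℤ)
    (hd : p00 * p11 - p01 ^ 2 = -Δ) :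
    (bfP p00 p01 p11 x0 x1 y0 y1) ^ 2 -
      bfP p00 p01 p11 x0 x1 x0 x1 * bfP p00 p01 p11 y0 y1 y0 y1 =
      Δ * (x0 * y1 - x1 * y0) ^ 2 := by
  simp only [bfP]; linear_combination (-(x0 * y1 - x1 * y0) ^ 2) * hd

private lemma R3_identity (p00 p01 p11 AP0 AP1 x0 x1 H0 H1 : ℤ) :
    (H0 * AP1 - H1 * AP0) * bfP p00 p01 p11 x0 x1 H0 H1 -
      (x0 * AP1 - x1 * AP0) * bfP p00 p01 p11 H0 H1 H0 H1 =
      -((x0 * H1 - x1 * H0) * bfP p00 p01 p11 AP0 AP1 H0 H1) := by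
  simp only [bfP]; ring

private lemma R3'_identity (p00 p01 p11 AP0 AP1 x0 x1 H0 H1 : ℤ) :
    (H0 * AP1 - H1 * AP0) ^ 2 * bfP p00 p01 p11 x0 x1 x0 x1 -
      2 * (x0 * AP1 - x1 * AP0) * (H0 * AP1 - H1 * AP0) * bfP p00 p01 p11 x0 x1 H0 H1 +
      (x0 * AP1 - x1 * AP0) ^ 2 * bfP p00 p01 p11 H0 H1 H0 H1 =
      (x0 * H1 - x1 * H0) ^ 2 * bfP p00 p01 p11 AP0 AP1 AP0 AP1 := by
  simp only [bfP]; ring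

private lemma R4_identity (c00 c01 c10 c11 AP0 AP1 BM0 BM1 x0 x1 H0 H1 : ℤ)
    (ha0 : AP0 * c00 + AP1 * c10 = 0) (ha1 : AP0 * c01 + AP1 * c11 = 0) :
    (H0 * AP1 - H1 * AP0) * cfX c00 c01 c10 c11 x0 x1 BM0 BM1 =
      (x0 * AP1 - x1 * AP0) * cfX c00 c01 c10 c11 H0 H1 BM0 BM1 := by
  simp only [cfX]
  linear_combination ((H0 * x1 - H1 * x0) * BM0) * ha0 + ((H0 * x1 - H1 * x0) * BM1) * ha1

private lemma R6_identity (m00 m01 m11 dM AM0 AM1 BM0 BM1 : ℤ)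
    (hd : m00 * m11 - m01 ^ 2 = -dM)
    (horth : bfP m00 m01 m11 AM0 AM1 BM0 BM1 = 0) :
    dM * (BM0 * AM1 - BM1 * AM0) ^ 2 =
      -(bfP m00 m01 m11 BM0 BM1 BM0 BM1 * bfP m00 m01 m11 AM0 AM1 AM0 AM1) := by
  simp only [bfP] at horth ⊢
  linear_combination (m00 * AM0 * BM0 + m01 * (AM0 * BM1 + AM1 * BM0) + m11 * AM1 * BM1) * horth +
    (BM0 * AM1 - BM1 * AM0) ^ 2 * hd

private lemma gB_ne_zero (m00 m01 m11 AM0 AM1 BM0 BM1 : ℤ)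
    (hAM2 : 0 < bfP m00 m01 m11 AM0 AM1 AM0 AM1)
    (horth : bfP m00 m01 m11 AM0 AM1 BM0 BM1 = 0)
    (hBMne : ¬(BM0 = 0 ∧ BM1 = 0)) :
    BM0 * AM1 - BM1 * AM0 ≠ 0 := by
  intro hg
  have hAM2ne : bfP m00 m01 m11 AM0 AM1 AM0 AM1 ≠ 0 := ne_of_gt hAM2
  have e0 : BM0 * bfP m00 m01 m11 AM0 AM1 AM0 AM1 = 0 := by
    simp only [bfP] at horth ⊢
    linear_combination AM0 * horth + (m01 * AM0 + m11 * AM1) * hg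
  have e1 : BM1 * bfP m00 m01 m11 AM0 AM1 AM0 AM1 = 0 := by
    simp only [bfP] at horth ⊢
    linear_combination AM1 * horth - (m00 * AM0 + m01 * AM1) * hg
  exact hBMne ⟨(mul_eq_zero.mp e0).resolve_right hAM2ne,
    (mul_eq_zero.mp e1).resolve_right hAM2ne⟩
private lemma branch
    (bP bM : (Fin 2 → ℤ) →ₗ[ℤ] (Fin 2 → ℤ) →ₗ[ℤ] ℤ)
    (hsymmP : ∀ x y, bP x y = bP y x) (hsymmM : ∀ x y, bM x y = bM y x)
    (ΔP ΔM : ℤ) (hΔP : 0 < ΔP) (hΔM : 0 < ΔM)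
    (hdiscP : Matrix.det
      !![bP (Pi.single 0 1) (Pi.single 0 1), bP (Pi.single 0 1) (Pi.single 1 1);
         bP (Pi.single 1 1) (Pi.single 0 1), bP (Pi.single 1 1) (Pi.single 1 1)] = -ΔP)
    (hdiscM : Matrix.det
      !![bM (Pi.single 0 1) (Pi.single 0 1), bM (Pi.single 0 1) (Pi.single 1 1);
         bM (Pi.single 1 1) (Pi.single 0 1), bM (Pi.single 1 1) (Pi.single 1 1)] = -ΔM)
    (AP AM : Fin 2 → ℤ) (hAPpos : 0 < bP AP AP) (hAMpos : 0 < bM AM AM)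
    (BM : Fin 2 → ℤ)
    (hBMorth : bM AM BM = 0) (hBMne : BM ≠ 0)
    (hBMgen : ∀ v, bM AM v = 0 → ∃ n : ℤ, v = n • BM)
    (k : ℤ) (hk : 0 < k)
    (hsig : k ^ 2 * (bP AP AP) * (bM AM AM) < ΔP * ΔM)
    (bW : ((Fin 2 → ℤ) × (Fin 2 → ℤ)) →ₗ[ℤ] ((Fin 2 → ℤ) × (Fin 2 → ℤ)) →ₗ[ℤ] ℤ)
    (hsymmW : ∀ x y, bW x y = bW y x)
    (hWP : ∀ v w : Fin 2 → ℤ, bW (v, 0) (w, 0) = bP v w)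
    (hWM : ∀ v w : Fin 2 → ℤ, bW (0, v) (0, w) = bM v w)
    (horthP : ∀ w : Fin 2 → ℤ, bW (AP, 0) (0, w) = 0)
    (horthM : ∀ v : Fin 2 → ℤ, bW (v, 0) (0, AM) = 0)
    (hcrossdvd : ∀ v w : Fin 2 → ℤ, k ∣ bW (v, 0) (0, w))
    (hcrossgen : ∃ v w : Fin 2 → ℤ, bW (v, 0) (0, w) = k) :
    ∀ H : Fin 2 → ℤ,
      -(bP H H) * (bM BM BM) * (ΔP * ΔM - k ^ 2 * (bP AP AP) * (bM AM AM)) ≥ ΔP * (ΔP * ΔM) →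
      ∀ v : (Fin 2 → ℤ) × (Fin 2 → ℤ), bW v (0, AM) = 0 →
        LinearIndependent ℤ ![v, ((H, 0) : (Fin 2 → ℤ) × (Fin 2 → ℤ))] →
        (bW v (H, 0)) ^ 2 - (bW v v) * (bP H H) ≥ ΔP := by
  intro H hH v hmem hli
  obtain ⟨x, y⟩ := v
  have eP := expand_bilin bP hsymmP
  have eM := expand_bilin bM hsymmM
  -- name the scalar coefficients
  obtain ⟨p00, hp00⟩ : ∃ t, bP (Pi.single 0 1) (Pi.single 0 1) = t := ⟨_, rfl⟩
  obtain ⟨p01, hp01⟩ : ∃ t, bP (Pi.single 0 1) (Pi.single 1 1) = t := ⟨_, rfl⟩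
  obtain ⟨p11, hp11⟩ : ∃ t, bP (Pi.single 1 1) (Pi.single 1 1) = t := ⟨_, rfl⟩
  obtain ⟨m00, hm00⟩ : ∃ t, bM (Pi.single 0 1) (Pi.single 0 1) = t := ⟨_, rfl⟩
  obtain ⟨m01, hm01⟩ : ∃ t, bM (Pi.single 0 1) (Pi.single 1 1) = t := ⟨_, rfl⟩
  obtain ⟨m11, hm11⟩ : ∃ t, bM (Pi.single 1 1) (Pi.single 1 1) = t := ⟨_, rfl⟩
  rw [hp00, hp01, hp11] at eP
  rw [hm00, hm01, hm11] at eM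
  -- pair decompositions
  have epair1 : ∀ u v : ℤ,
      ((u • Pi.single 0 1 + v • Pi.single 1 1 : Fin 2 → ℤ), (0 : Fin 2 → ℤ)) =
      u • ((Pi.single 0 1 : Fin 2 → ℤ), (0 : Fin 2 → ℤ)) +
      v • ((Pi.single 1 1 : Fin 2 → ℤ), (0 : Fin 2 → ℤ)) := by
    intro u v; simp [Prod.smul_mk, Prod.mk_add_mk]
  have epair2 : ∀ u v : ℤ,
      ((0 : Fin 2 → ℤ), (u • Pi.single 0 1 + v • Pi.single 1 1 : Fin 2 → ℤ)) =
      u • ((0 : Fin 2 → ℤ), (Pi.single 0 1 : Fin 2 → ℤ)) +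
      v • ((0 : Fin 2 → ℤ), (Pi.single 1 1 : Fin 2 → ℤ)) := by
    intro u v; simp [Prod.smul_mk, Prod.mk_add_mk]
  obtain ⟨c00, hc00⟩ : ∃ t, bW ((Pi.single 0 1 : Fin 2 → ℤ), (0 : Fin 2 → ℤ))
      ((0 : Fin 2 → ℤ), (Pi.single 0 1 : Fin 2 → ℤ)) = t := ⟨_, rfl⟩
  obtain ⟨c01, hc01⟩ : ∃ t, bW ((Pi.single 0 1 : Fin 2 → ℤ), (0 : Fin 2 → ℤ))
      ((0 : Fin 2 → ℤ), (Pi.single 1 1 : Fin 2 → ℤ)) = t := ⟨_, rfl⟩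
  obtain ⟨c10, hc10⟩ : ∃ t, bW ((Pi.single 1 1 : Fin 2 → ℤ), (0 : Fin 2 → ℤ))
      ((0 : Fin 2 → ℤ), (Pi.single 0 1 : Fin 2 → ℤ)) = t := ⟨_, rfl⟩
  obtain ⟨c11, hc11⟩ : ∃ t, bW ((Pi.single 1 1 : Fin 2 → ℤ), (0 : Fin 2 → ℤ))
      ((0 : Fin 2 → ℤ), (Pi.single 1 1 : Fin 2 → ℤ)) = t := ⟨_, rfl⟩
  have eX : ∀ a d : Fin 2 → ℤ, bW (a, 0) (0, d) =
      cfX c00 c01 c10 c11 (a 0) (a 1) (d 0) (d 1) := by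
    intro a d
    have key : ∀ u v s t : ℤ,
        bW ((u • Pi.single 0 1 + v • Pi.single 1 1 : Fin 2 → ℤ), (0 : Fin 2 → ℤ))
          ((0 : Fin 2 → ℤ), (s • Pi.single 0 1 + t • Pi.single 1 1 : Fin 2 → ℤ)) =
        cfX c00 c01 c10 c11 u v s t := by
      intro u v s t
      rw [epair1 u v, epair2 s t]
      simp only [map_add, map_smul, LinearMap.add_apply, LinearMap.smul_apply, smul_eq_mul,
        hc00, hc01, hc10, hc11, cfX]
      ring
    have h := key (a 0) (a 1) (d 0) (d 1)
    rwa [← vec_decomp a, ← vec_decomp d] at h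
  have eW : ∀ a b c d : Fin 2 → ℤ, bW (a, b) (c, d) =
      bP a c + bM b d + bW (a, 0) (0, d) + bW (c, 0) (0, b) := by
    intro a b c d
    have hsplit : ∀ a b : Fin 2 → ℤ,
        ((a, b) : (Fin 2 → ℤ) × (Fin 2 → ℤ)) = (a, 0) + (0, b) := by
      intro a b; simp [Prod.mk_add_mk]
    rw [hsplit a b, hsplit c d]
    simp only [map_add, LinearMap.add_apply]
    rw [hWP, hWM, hsymmW ((0 : Fin 2 → ℤ), b) ((c : Fin 2 → ℤ), (0 : Fin 2 → ℤ))]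
    ring
  -- membership: y is a multiple of BM
  have hyAM : bM AM y = 0 := by
    have h := hmem
    rw [eW x y 0 AM, horthM x, Prod.mk_zero_zero] at h
    simp only [map_zero, LinearMap.zero_apply, add_zero, zero_add] at h
    rw [hsymmM AM y]; linear_combination h
  obtain ⟨n, rfl⟩ := hBMgen y hyAM
  -- scalar constraints
  have ha0 : AP 0 * c00 + AP 1 * c10 = 0 := by
    have h := horthP (Pi.single 0 1)
    rw [eX AP (Pi.single 0 1)] at h
    simp only [cfX, Pi.single_eq_same, Pi.single_eq_of_ne (show (1 : Fin 2) ≠ 0 by decide),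
      mul_one, mul_zero, add_zero, zero_add] at h
    linear_combination h
  have ha1 : AP 0 * c01 + AP 1 * c11 = 0 := by
    have h := horthP (Pi.single 1 1)
    rw [eX AP (Pi.single 1 1)] at h
    simp only [cfX, Pi.single_eq_same, Pi.single_eq_of_ne (show (0 : Fin 2) ≠ 1 by decide),
      mul_one, mul_zero, add_zero, zero_add] at h
    linear_combination h
  have hb0 : c00 * AM 0 + c01 * AM 1 = 0 := by
    have h := horthM (Pi.single 0 1)
    rw [eX (Pi.single 0 1) AM] at h
    simp only [cfX, Pi.single_eq_same, Pi.single_eq_of_ne (show (1 : Fin 2) ≠ 0 by decide),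
      mul_one, mul_zero, add_zero, zero_add, one_mul, zero_mul] at h
    linear_combination h
  have hb1 : c10 * AM 0 + c11 * AM 1 = 0 := by
    have h := horthM (Pi.single 1 1)
    rw [eX (Pi.single 1 1) AM] at h
    simp only [cfX, Pi.single_eq_same, Pi.single_eq_of_ne (show (0 : Fin 2) ≠ 1 by decide),
      mul_one, mul_zero, add_zero, zero_add, one_mul, zero_mul] at h
    linear_combination h
  have hd00 : k ∣ c00 := by rw [← hc00]; exact hcrossdvd _ _
  have hd01 : k ∣ c01 := by rw [← hc01]; exact hcrossdvd _ _
  have hd10 : k ∣ c10 := by rw [← hc10]; exact hcrossdvd _ _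
  have hd11 : k ∣ c11 := by rw [← hc11]; exact hcrossdvd _ _
  obtain ⟨vv, ww, hvw⟩ := hcrossgen
  rw [eX vv ww] at hvw
  have hval : c00 * vv 0 * ww 0 + c01 * vv 0 * ww 1 + c10 * vv 1 * ww 0 +
      c11 * vv 1 * ww 1 = k := by
    simp only [cfX] at hvw; linear_combination hvw
  -- scalar discriminants
  have hdP' : p00 * p11 - p01 ^ 2 = -ΔP := by
    rw [Matrix.det_fin_two_of, hsymmP (Pi.single 1 1) (Pi.single 0 1), hp00, hp01, hp11]
      at hdiscP
    linear_combination hdiscP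
  have hdM' : m00 * m11 - m01 ^ 2 = -ΔM := by
    rw [Matrix.det_fin_two_of, hsymmM (Pi.single 1 1) (Pi.single 0 1), hm00, hm01, hm11]
      at hdiscM
    linear_combination hdiscM
  -- positivity facts in scalar form
  rw [eP AP AP] at hAPpos hsig
  rw [eM AM AM] at hAMpos hsig
  rw [eP H H, eM BM BM, eP AP AP, eM AM AM] at hH
  have horthBM' : bfP m00 m01 m11 (AM 0) (AM 1) (BM 0) (BM 1) = 0 := by
    rw [← eM AM BM]; exact hBMorth
  have hBMne' : ¬(BM 0 = 0 ∧ BM 1 = 0) := by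
    rintro ⟨h0, h1⟩
    exact hBMne (by funext i; fin_cases i <;> simp [h0, h1])
  have hAPne : ¬(AP 0 = 0 ∧ AP 1 = 0) := by
    rintro ⟨h0, h1⟩
    rw [h0, h1] at hAPpos
    simp [bfP] at hAPpos
  have hgB := gB_ne_zero m00 m01 m11 (AM 0) (AM 1) (BM 0) (BM 1) hAMpos horthBM' hBMne'
  have hcb := crossbound k c00 c01 c10 c11 (AP 0) (AP 1) (AM 0) (AM 1) (BM 0) (BM 1)
    (vv 0) (vv 1) (ww 0) (ww 1) hk hAPne hgB ha0 ha1 hb0 hb1 hd00 hd01 hd10 hd11 hval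
  have R5x : cfX c00 c01 c10 c11 (x 0) (x 1) (BM 0) (BM 1) ^ 2 ≤
      k ^ 2 * (BM 0 * AM 1 - BM 1 * AM 0) ^ 2 * (x 0 * AP 1 - x 1 * AP 0) ^ 2 := by
    simpa only [cfX] using hcb (x 0) (x 1)
  have R5H : cfX c00 c01 c10 c11 (H 0) (H 1) (BM 0) (BM 1) ^ 2 ≤
      k ^ 2 * (BM 0 * AM 1 - BM 1 * AM 0) ^ 2 * (H 0 * AP 1 - H 1 * AP 0) ^ 2 := by
    simpa only [cfX] using hcb (H 0) (H 1)
  have R1 := disc_identity p00 p01 p11 ΔP (x 0) (x 1) (H 0) (H 1) hdP'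
  have R2 : bfP p00 p01 p11 (AP 0) (AP 1) (H 0) (H 1) ^ 2 -
      bfP p00 p01 p11 (AP 0) (AP 1) (AP 0) (AP 1) * bfP p00 p01 p11 (H 0) (H 1) (H 0) (H 1) =
      ΔP * (H 0 * AP 1 - H 1 * AP 0) ^ 2 := by
    have h := disc_identity p00 p01 p11 ΔP (AP 0) (AP 1) (H 0) (H 1) hdP'
    linear_combination h
  have R3 := R3_identity p00 p01 p11 (AP 0) (AP 1) (x 0) (x 1) (H 0) (H 1)
  have R3' := R3'_identity p00 p01 p11 (AP 0) (AP 1) (x 0) (x 1) (H 0) (H 1)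
  have R4 := R4_identity c00 c01 c10 c11 (AP 0) (AP 1) (BM 0) (BM 1) (x 0) (x 1) (H 0) (H 1)
    ha0 ha1
  have R6 := R6_identity m00 m01 m11 ΔM (AM 0) (AM 1) (BM 0) (BM 1) hdM' horthBM'
  -- linear independence gives the nondegeneracy condition
  have hDn : ¬(x 0 * H 1 - x 1 * H 0 = 0 ∧ n = 0) := by
    rintro ⟨hD0, rfl⟩
    rw [zero_smul] at hli
    rw [LinearIndependent.pair_iff] at hli
    have hcomb0 : (H 0) • x + (-(x 0)) • H = 0 := by
      funext i; fin_cases i <;>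
        simp only [Fin.zero_eta, Fin.mk_one, Fin.isValue, Pi.add_apply, Pi.smul_apply,
          smul_eq_mul, Pi.zero_apply, neg_mul]
      · ring
      · linear_combination -hD0
    have hcomb1 : (H 1) • x + (-(x 1)) • H = 0 := by
      funext i; fin_cases i <;>
        simp only [Fin.zero_eta, Fin.mk_one, Fin.isValue, Pi.add_apply, Pi.smul_apply,
          smul_eq_mul, Pi.zero_apply, neg_mul]
      · linear_combination hD0
      · ring
    have c1 := hli (H 0) (-(x 0)) (by
      rw [Prod.smul_mk, Prod.smul_mk, Prod.mk_add_mk, hcomb0, smul_zero, smul_zero, add_zero]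
      exact Prod.mk_zero_zero)
    have c2 := hli (H 1) (-(x 1)) (by
      rw [Prod.smul_mk, Prod.smul_mk, Prod.mk_add_mk, hcomb1, smul_zero, smul_zero, add_zero]
      exact Prod.mk_zero_zero)
    have hHzero : H = 0 := by
      funext i; fin_cases i
      · simpa using c1.1
      · simpa using c2.1
    rw [hHzero] at hH
    rw [show bfP p00 p01 p11 ((0 : Fin 2 → ℤ) 0) ((0 : Fin 2 → ℤ) 1) ((0 : Fin 2 → ℤ) 0)
      ((0 : Fin 2 → ℤ) 1) = 0 by simp [bfP]] at hH
    rw [neg_zero, zero_mul, zero_mul] at hH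
    exact (mul_pos hΔP (mul_pos hΔP hΔM)).not_ge hH
  -- convert the goal to scalars
  have egoal1 : bW (x, n • BM) (H, 0) =
      bfP p00 p01 p11 (x 0) (x 1) (H 0) (H 1) +
        n * cfX c00 c01 c10 c11 (H 0) (H 1) (BM 0) (BM 1) := by
    rw [eW x (n • BM) H 0, eX H (n • BM), eP x H, Prod.mk_zero_zero]
    simp only [map_zero, LinearMap.zero_apply, add_zero, zero_add, Pi.smul_apply, smul_eq_mul]
    simp only [cfX]; ring
  have egoal2 : bW (x, n • BM) (x, n • BM) =
      bfP p00 p01 p11 (x 0) (x 1) (x 0) (x 1) +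
        2 * n * cfX c00 c01 c10 c11 (x 0) (x 1) (BM 0) (BM 1) +
        n ^ 2 * bfP m00 m01 m11 (BM 0) (BM 1) (BM 0) (BM 1) := by
    rw [eW x (n • BM) x (n • BM), eX x (n • BM), eP x x, eM (n • BM) (n • BM)]
    simp only [Pi.smul_apply, smul_eq_mul, bfP, cfX]
    ring
  rw [egoal1, egoal2, eP H H]
  exact core ΔP ΔM k
    (bfP p00 p01 p11 (AP 0) (AP 1) (AP 0) (AP 1))
    (bfP m00 m01 m11 (AM 0) (AM 1) (AM 0) (AM 1))
    (bfP m00 m01 m11 (BM 0) (BM 1) (BM 0) (BM 1))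
    (bfP p00 p01 p11 (H 0) (H 1) (H 0) (H 1))
    (bfP p00 p01 p11 (x 0) (x 1) (H 0) (H 1))
    (bfP p00 p01 p11 (x 0) (x 1) (x 0) (x 1))
    (x 0 * H 1 - x 1 * H 0)
    (x 0 * AP 1 - x 1 * AP 0)
    (H 0 * AP 1 - H 1 * AP 0)
    (bfP p00 p01 p11 (AP 0) (AP 1) (H 0) (H 1))
    (cfX c00 c01 c10 c11 (x 0) (x 1) (BM 0) (BM 1))
    (cfX c00 c01 c10 c11 (H 0) (H 1) (BM 0) (BM 1))
    (BM 0 * AM 1 - BM 1 * AM 0)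
    n
    hΔP hΔM hAPpos hAMpos hsig R1 R2 R3 R3' R4 R5x R5H R6 hgB hH hDn
/-- Lemma 7.2: with `W_k = N₊ ⊕ N₋` (where `A± ⊥ N∓` and the cross-pairing is generated
by `k > 0`, and `Δ₊Δ₋ > k²A₊²A₋²`), `B±` generating `A±^⊥` in `N±`, and `Λ±` the
orthogonal complement of `A∓` in `W_k`: if `H ∈ N±` satisfies
`-H²B∓²(Δ₊Δ₋ - k²A₊²A₋²) ≥ Δ±Δ₊Δ₋`, then `(v·H)² - v²H² ≥ Δ±` for every `v ∈ Λ±`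
linearly independent of `H`. (Both choices of sign are stated.) -/
theorem stmt_4
    (bP bM : (Fin 2 → ℤ) →ₗ[ℤ] (Fin 2 → ℤ) →ₗ[ℤ] ℤ)
    (hsymmP : ∀ x y, bP x y = bP y x) (hsymmM : ∀ x y, bM x y = bM y x)
    (ΔP ΔM : ℤ) (hΔP : 0 < ΔP) (hΔM : 0 < ΔM)
    (hdiscP : Matrix.det
      !![bP (Pi.single 0 1) (Pi.single 0 1), bP (Pi.single 0 1) (Pi.single 1 1);
         bP (Pi.single 1 1) (Pi.single 0 1), bP (Pi.single 1 1) (Pi.single 1 1)] = -ΔP)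
    (hdiscM : Matrix.det
      !![bM (Pi.single 0 1) (Pi.single 0 1), bM (Pi.single 0 1) (Pi.single 1 1);
         bM (Pi.single 1 1) (Pi.single 0 1), bM (Pi.single 1 1) (Pi.single 1 1)] = -ΔM)
    (AP AM : Fin 2 → ℤ) (hAPpos : 0 < bP AP AP) (hAMpos : 0 < bM AM AM)
    (BP BM : Fin 2 → ℤ)
    (hBPorth : bP AP BP = 0) (hBPne : BP ≠ 0)
    (hBPgen : ∀ v, bP AP v = 0 → ∃ n : ℤ, v = n • BP)
    (hBMorth : bM AM BM = 0) (hBMne : BM ≠ 0)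
    (hBMgen : ∀ v, bM AM v = 0 → ∃ n : ℤ, v = n • BM)
    (k : ℤ) (hk : 0 < k)
    (hsig : k ^ 2 * (bP AP AP) * (bM AM AM) < ΔP * ΔM)
    (bW : ((Fin 2 → ℤ) × (Fin 2 → ℤ)) →ₗ[ℤ] ((Fin 2 → ℤ) × (Fin 2 → ℤ)) →ₗ[ℤ] ℤ)
    (hsymmW : ∀ x y, bW x y = bW y x)
    (hWP : ∀ v w : Fin 2 → ℤ, bW (v, 0) (w, 0) = bP v w)
    (hWM : ∀ v w : Fin 2 → ℤ, bW (0, v) (0, w) = bM v w)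
    (horthP : ∀ w : Fin 2 → ℤ, bW (AP, 0) (0, w) = 0)
    (horthM : ∀ v : Fin 2 → ℤ, bW (v, 0) (0, AM) = 0)
    (hcrossdvd : ∀ v w : Fin 2 → ℤ, k ∣ bW (v, 0) (0, w))
    (hcrossgen : ∃ v w : Fin 2 → ℤ, bW (v, 0) (0, w) = k) :
    (∀ H : Fin 2 → ℤ,
      -(bP H H) * (bM BM BM) * (ΔP * ΔM - k ^ 2 * (bP AP AP) * (bM AM AM)) ≥ ΔP * (ΔP * ΔM) →
      ∀ v : (Fin 2 → ℤ) × (Fin 2 → ℤ), bW v (0, AM) = 0 →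
        LinearIndependent ℤ ![v, ((H, 0) : (Fin 2 → ℤ) × (Fin 2 → ℤ))] →
        (bW v (H, 0)) ^ 2 - (bW v v) * (bP H H) ≥ ΔP) ∧
    (∀ H : Fin 2 → ℤ,
      -(bM H H) * (bP BP BP) * (ΔP * ΔM - k ^ 2 * (bP AP AP) * (bM AM AM)) ≥ ΔM * (ΔP * ΔM) →
      ∀ v : (Fin 2 → ℤ) × (Fin 2 → ℤ), bW v (AP, 0) = 0 →
        LinearIndependent ℤ ![v, ((0, H) : (Fin 2 → ℤ) × (Fin 2 → ℤ))] →
        (bW v (0, H)) ^ 2 - (bW v v) * (bM H H) ≥ ΔM) := by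
  constructor
  · exact branch bP bM hsymmP hsymmM ΔP ΔM hΔP hΔM hdiscP hdiscM AP AM hAPpos hAMpos BM
      hBMorth hBMne hBMgen k hk hsig bW hsymmW hWP hWM horthP horthM hcrossdvd hcrossgen
  · -- apply `branch` with the two factors swapped
    have eswap : ∀ u v c d : Fin 2 → ℤ,
        (bW.compl₁₂ (LinearEquiv.prodComm ℤ (Fin 2 → ℤ) (Fin 2 → ℤ)).toLinearMap
          (LinearEquiv.prodComm ℤ (Fin 2 → ℤ) (Fin 2 → ℤ)).toLinearMap) (u, v) (c, d) =
        bW (v, u) (d, c) := fun _ _ _ _ => rfl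
    have hsymmW' : ∀ x y : (Fin 2 → ℤ) × (Fin 2 → ℤ),
        (bW.compl₁₂ (LinearEquiv.prodComm ℤ (Fin 2 → ℤ) (Fin 2 → ℤ)).toLinearMap
          (LinearEquiv.prodComm ℤ (Fin 2 → ℤ) (Fin 2 → ℤ)).toLinearMap) x y =
        (bW.compl₁₂ (LinearEquiv.prodComm ℤ (Fin 2 → ℤ) (Fin 2 → ℤ)).toLinearMap
          (LinearEquiv.prodComm ℤ (Fin 2 → ℤ) (Fin 2 → ℤ)).toLinearMap) y x := by
      rintro ⟨a, b⟩ ⟨c, d⟩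
      rw [eswap, eswap]
      exact hsymmW _ _
    have hsig' : k ^ 2 * (bM AM AM) * (bP AP AP) < ΔM * ΔP := by linarith [hsig]
    have hWP' : ∀ v w : Fin 2 → ℤ,
        (bW.compl₁₂ (LinearEquiv.prodComm ℤ (Fin 2 → ℤ) (Fin 2 → ℤ)).toLinearMap
          (LinearEquiv.prodComm ℤ (Fin 2 → ℤ) (Fin 2 → ℤ)).toLinearMap) (v, 0) (w, 0) =
        bM v w := by
      intro v w; rw [eswap]; exact hWM v w
    have hWM' : ∀ v w : Fin 2 → ℤ,
        (bW.compl₁₂ (LinearEquiv.prodComm ℤ (Fin 2 → ℤ) (Fin 2 → ℤ)).toLinearMap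
          (LinearEquiv.prodComm ℤ (Fin 2 → ℤ) (Fin 2 → ℤ)).toLinearMap) (0, v) (0, w) =
        bP v w := by
      intro v w; rw [eswap]; exact hWP v w
    have horthP' : ∀ w : Fin 2 → ℤ,
        (bW.compl₁₂ (LinearEquiv.prodComm ℤ (Fin 2 → ℤ) (Fin 2 → ℤ)).toLinearMap
          (LinearEquiv.prodComm ℤ (Fin 2 → ℤ) (Fin 2 → ℤ)).toLinearMap) (AM, 0) (0, w) = 0 := by
      intro w; rw [eswap, hsymmW]; exact horthM w
    have horthM' : ∀ v : Fin 2 → ℤ,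
        (bW.compl₁₂ (LinearEquiv.prodComm ℤ (Fin 2 → ℤ) (Fin 2 → ℤ)).toLinearMap
          (LinearEquiv.prodComm ℤ (Fin 2 → ℤ) (Fin 2 → ℤ)).toLinearMap) (v, 0) (0, AP) = 0 := by
      intro v; rw [eswap, hsymmW]; exact horthP v
    have hcrossdvd' : ∀ v w : Fin 2 → ℤ,
        k ∣ (bW.compl₁₂ (LinearEquiv.prodComm ℤ (Fin 2 → ℤ) (Fin 2 → ℤ)).toLinearMap
          (LinearEquiv.prodComm ℤ (Fin 2 → ℤ) (Fin 2 → ℤ)).toLinearMap) (v, 0) (0, w) := by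
      intro v w; rw [eswap, hsymmW]; exact hcrossdvd w v
    have hcrossgen' : ∃ v w : Fin 2 → ℤ,
        (bW.compl₁₂ (LinearEquiv.prodComm ℤ (Fin 2 → ℤ) (Fin 2 → ℤ)).toLinearMap
          (LinearEquiv.prodComm ℤ (Fin 2 → ℤ) (Fin 2 → ℤ)).toLinearMap) (v, 0) (0, w) = k := by
      obtain ⟨v, w, h⟩ := hcrossgen
      exact ⟨w, v, by rw [eswap, hsymmW]; exact h⟩
    have hB := branch bM bP hsymmM hsymmP ΔM ΔP hΔM hΔP hdiscM hdiscP AM AP hAMpos hAPpos BP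
      hBPorth hBPne hBPgen k hk hsig'
      (bW.compl₁₂ (LinearEquiv.prodComm ℤ (Fin 2 → ℤ) (Fin 2 → ℤ)).toLinearMap
        (LinearEquiv.prodComm ℤ (Fin 2 → ℤ) (Fin 2 → ℤ)).toLinearMap)
      hsymmW' hWP' hWM' horthP' horthM' hcrossdvd' hcrossgen'
    intro H hH2 v hmem hli
    obtain ⟨a, b⟩ := v
    have hH2' : -(bM H H) * (bP BP BP) * (ΔM * ΔP - k ^ 2 * (bM AM AM) * (bP AP AP)) ≥
        ΔM * (ΔM * ΔP) := by linarith [hH2]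
    have hmem' : (bW.compl₁₂ (LinearEquiv.prodComm ℤ (Fin 2 → ℤ) (Fin 2 → ℤ)).toLinearMap
        (LinearEquiv.prodComm ℤ (Fin 2 → ℤ) (Fin 2 → ℤ)).toLinearMap) (b, a) (0, AP) = 0 := by
      rw [eswap]; exact hmem
    have hinj : LinearMap.ker (LinearEquiv.prodComm ℤ (Fin 2 → ℤ) (Fin 2 → ℤ)).toLinearMap = ⊥ :=
      LinearEquiv.ker _
    have hli' := hli.map' _ hinj
    have heq : ((LinearEquiv.prodComm ℤ (Fin 2 → ℤ) (Fin 2 → ℤ)).toLinearMap) ∘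
        ![((a, b) : (Fin 2 → ℤ) × (Fin 2 → ℤ)), ((0, H) : (Fin 2 → ℤ) × (Fin 2 → ℤ))] =
        ![((b, a) : (Fin 2 → ℤ) × (Fin 2 → ℤ)), ((H, 0) : (Fin 2 → ℤ) × (Fin 2 → ℤ))] := by
      funext i; fin_cases i <;> rfl
    rw [heq] at hli'
    have hres := hB H hH2' (b, a) hmem' hli'
    rw [eswap b a H 0, eswap b a b a] at hres
    exact hres
end

section
/- Let $W_1$ be the rank 4 lattice with Gram matrix $\begin{pmatrix} 4 & 11 & 1 & 0 \\ 11 & 24 & 0 & 0 \\ 1 & 0 & 4 & 11 \\ 0 & 0 & 11 & 24 \end{pmatrix}$ in basis $G_+, A_+, G_-, A_-$. Then the vector $K := G_+ + A_+ - G_- - A_-$ satisfies $K^2 = 98$, and $K \cdot w \equiv 0 \pmod 7$ for every $w \in W_1$; hence adjoining $\frac{1}{7}K$ to $W_1$ yields an integral overlattice of index 7. -/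
open Matrix
/-- The Gram matrix of the rank 4 lattice `W₁` in basis `G₊, A₊, G₋, A₋`. -/
def stmt11Gram : Matrix (Fin 4) (Fin 4) ℤ :=
  !![4, 11, 1, 0; 11, 24, 0, 0; 1, 0, 4, 11; 0, 0, 11, 24]

/-- The vector `K = G₊ + A₊ - G₋ - A₋` satisfies `K² = 98` and `K·w ≡ 0 (mod 7)` for all
`w ∈ W₁`; hence adjoining `K/7` to `W₁` yields an integral overlattice of index 7. -/
theorem stmt_11 :
    (![1, 1, -1, -1] : Fin 4 → ℤ) ⬝ᵥ stmt11Gram.mulVec ![1, 1, -1, -1] = 98 ∧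
    (∀ w : Fin 4 → ℤ, (7 : ℤ) ∣ (![1, 1, -1, -1] : Fin 4 → ℤ) ⬝ᵥ stmt11Gram.mulVec w) ∧
    (let Wspan : Submodule ℤ (Fin 4 → ℚ) :=
      Submodule.span ℤ (Set.range fun i => (Pi.single i 1 : Fin 4 → ℚ))
     let Kq : Fin 4 → ℚ := ![1, 1, -1, -1]
     let L' : Submodule ℤ (Fin 4 → ℚ) := Wspan ⊔ Submodule.span ℤ {(7 : ℚ)⁻¹ • Kq}
     (∀ x ∈ L', ∀ y ∈ L',
        ∃ m : ℤ, x ⬝ᵥ (stmt11Gram.map (Int.cast : ℤ → ℚ)).mulVec y = (m : ℚ)) ∧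
     (7 : ℚ)⁻¹ • Kq ∉ Wspan ∧ (∀ x ∈ L', (7 : ℤ) • x ∈ Wspan)) := by
  refine ⟨?_, ?_, ?_⟩
  · norm_num [stmt11Gram, Matrix.mulVec, dotProduct, Fin.sum_univ_four,
      Matrix.vecHead, Matrix.vecTail, Matrix.cons_val_two, Matrix.cons_val_three]
  · intro w
    refine ⟨2 * w 0 + 5 * w 1 - 2 * w 2 - 5 * w 3, ?_⟩
    simp [stmt11Gram, Matrix.mulVec, dotProduct, Fin.sum_univ_four,
      Matrix.vecHead, Matrix.vecTail]
    ring
  · intro Wspan Kq L'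
    set v : Fin 4 → ℚ := (7 : ℚ)⁻¹ • Kq with hv
    set T : Set (Fin 4 → ℚ) :=
      (Set.range fun i => (Pi.single i 1 : Fin 4 → ℚ)) ∪ {v} with hT
    have hL' : L' = Submodule.span ℤ T := (Submodule.span_union _ _).symm
    set M : Matrix (Fin 4) (Fin 4) ℚ := stmt11Gram.map (Int.cast : ℤ → ℚ) with hM
    have hKq : Kq = Pi.single 0 1 + Pi.single 1 1 - Pi.single 2 1 - Pi.single 3 1 := by
      funext i
      fin_cases i <;> simp [Kq, Pi.single_apply]
    have h7v : (7 : ℤ) • v = Kq := by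
      funext i
      simp [hv, Pi.smul_apply, smul_smul]
    have base : ∀ a ∈ T, ∀ b ∈ T, ∃ m : ℤ, a ⬝ᵥ M.mulVec b = (m : ℚ) := by
      rintro a (⟨i, rfl⟩ | rfl) b (⟨j, rfl⟩ | rfl)
      · exact ⟨stmt11Gram i j, by
          simp [single_dotProduct, Matrix.mulVec_single, hM, Matrix.map_apply]⟩
      · refine ⟨(![2, 5, -2, -5] : Fin 4 → ℤ) i, ?_⟩
        fin_cases i <;>
          norm_num [hv, Kq, hM, stmt11Gram, Matrix.mulVec, dotProduct,
            Fin.sum_univ_four, Pi.single_apply, Matrix.vecHead, Matrix.vecTail, Matrix.cons_val_two, Matrix.cons_val_three]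
      · refine ⟨(![2, 5, -2, -5] : Fin 4 → ℤ) j, ?_⟩
        fin_cases j <;>
          norm_num [hv, Kq, hM, stmt11Gram, Matrix.mulVec, dotProduct,
            Fin.sum_univ_four, Pi.single_apply, Matrix.vecHead, Matrix.vecTail, Matrix.cons_val_two, Matrix.cons_val_three]
      · refine ⟨2, ?_⟩
        norm_num [hv, Kq, hM, stmt11Gram, Matrix.mulVec, dotProduct,
          Fin.sum_univ_four, Matrix.vecHead, Matrix.vecTail, Matrix.cons_val_two, Matrix.cons_val_three]
    refine ⟨?_, ?_, ?_⟩
    · intro x hx y hy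
      rw [hL'] at hx hy
      induction hx, hy using Submodule.span_induction₂ with
      | mem_mem a b ha hb => exact base a ha b hb
      | zero_left y hy => exact ⟨0, by simp⟩
      | zero_right x hx => exact ⟨0, by simp⟩
      | add_left x y z hx hy hz h1 h2 =>
        obtain ⟨m, hm⟩ := h1; obtain ⟨n, hn⟩ := h2
        exact ⟨m + n, by rw [add_dotProduct, hm, hn]; push_cast; ring⟩
      | add_right x y z hx hy hz h1 h2 =>
        obtain ⟨m, hm⟩ := h1; obtain ⟨n, hn⟩ := h2
        exact ⟨m + n, by rw [Matrix.mulVec_add, dotProduct_add, hm, hn]; push_cast; ring⟩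
      | smul_left r x y hx hy h =>
        obtain ⟨m, hm⟩ := h
        refine ⟨r * m, ?_⟩
        rw [smul_dotProduct, hm, zsmul_eq_mul]
        push_cast
        ring
      | smul_right r x y hx hy h =>
        obtain ⟨m, hm⟩ := h
        refine ⟨r * m, ?_⟩
        rw [Matrix.mulVec_smul, dotProduct_smul, hm, zsmul_eq_mul]
        push_cast
        ring
    · intro hvW
      have hint : ∀ x ∈ Wspan, ∃ m : ℤ, x 0 = (m : ℚ) := by
        intro x hx
        induction hx using Submodule.span_induction with
        | mem a ha =>
          obtain ⟨i, rfl⟩ := ha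
          refine ⟨if (0 : Fin 4) = i then 1 else 0, ?_⟩
          simp only [Pi.single_apply]
          split <;> simp
        | zero => exact ⟨0, by simp⟩
        | add x y hx hy h1 h2 =>
          obtain ⟨m, hm⟩ := h1; obtain ⟨n, hn⟩ := h2
          exact ⟨m + n, by simp [hm, hn]⟩
        | smul r x hx h =>
          obtain ⟨m, hm⟩ := h
          refine ⟨r * m, ?_⟩
          rw [Pi.smul_apply, hm, zsmul_eq_mul]
          push_cast
          ring
      obtain ⟨m, hm⟩ := hint _ hvW
      have : (7 : ℚ)⁻¹ = (m : ℚ) := by simpa [hv, Kq] using hm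
      have h1 : (1 : ℚ) = 7 * m := by field_simp at this; linarith
      have h2 : (1 : ℤ) = 7 * m := by exact_mod_cast h1
      omega
    · intro x hx
      rw [hL'] at hx
      induction hx using Submodule.span_induction with
      | mem a ha =>
        rcases ha with ⟨i, rfl⟩ | rfl
        · exact Wspan.smul_mem 7 (Submodule.subset_span ⟨i, rfl⟩)
        · rw [h7v, hKq]
          have h0 : (Pi.single 0 1 : Fin 4 → ℚ) ∈ Wspan := Submodule.subset_span ⟨0, rfl⟩
          have h1 : (Pi.single 1 1 : Fin 4 → ℚ) ∈ Wspan := Submodule.subset_span ⟨1, rfl⟩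
          have h2 : (Pi.single 2 1 : Fin 4 → ℚ) ∈ Wspan := Submodule.subset_span ⟨2, rfl⟩
          have h3 : (Pi.single 3 1 : Fin 4 → ℚ) ∈ Wspan := Submodule.subset_span ⟨3, rfl⟩
          exact Submodule.sub_mem _ (Submodule.sub_mem _ (Submodule.add_mem _ h0 h1) h2) h3
      | zero => simp
      | add x y hx hy h1 h2 => rw [smul_add]; exact Wspan.add_mem h1 h2
      | smul r x hx h => rw [smul_comm]; exact Wspan.smul_mem r h
end
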